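/- Let a > v ≥ 0 and let f : (0,∞) → [0,∞) be a measurable nonnegative function such that ∫_0^r s^a f(s) ds ≤ c₁ r^v for all r ≥ r₀, for some constants c₁, r₀ > 0. Then ∫_r^∞ f(s) ds ≤ (c₁ a / (a − v)) · r^{v−a} for all r ≥ r₀. -/

import Mathlib

open MeasureTheory Set
open scoped ENNReal

lemma lintegral_Ioi_rpow_aux {p : ℝ} (hp : p < -1) {c : ℝ} (hc : 0 < c) :
    ∫⁻ t in Set.Ioi c, ENNReal.ofReal (t ^ p) = ENNReal.ofReal (-c ^ (p + 1) / (p + 1)) := by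
  rw [← integral_Ioi_rpow_of_lt hp hc,
    ← ofReal_integral_eq_lintegral_ofReal (integrableOn_Ioi_rpow_of_lt hp hc)]
  filter_upwards [ae_restrict_mem measurableSet_Ioi] with t ht
  exact Real.rpow_nonneg (le_of_lt (hc.trans ht)) p

theorem statement8 (a v : ℝ) (hv : 0 ≤ v) (hav : v < a)
    (f : ℝ → ℝ) (hf : Measurable f) (hfnn : ∀ s : ℝ, 0 < s → 0 ≤ f s)
    (c₁ r₀ : ℝ) (hc₁ : 0 < c₁) (hr₀ : 0 < r₀)
    (hbound : ∀ r : ℝ, r₀ ≤ r →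
      ∫⁻ s in Set.Ioc (0:ℝ) r, ENNReal.ofReal (s ^ a * f s) ≤ ENNReal.ofReal (c₁ * r ^ v)) :
    ∀ r : ℝ, r₀ ≤ r →
      ∫⁻ s in Set.Ioi r, ENNReal.ofReal (f s) ≤
        ENNReal.ofReal (c₁ * a / (a - v) * r ^ (v - a)) := by
  intro r hr
  have ha : 0 < a := lt_of_le_of_lt hv hav
  have hr0 : 0 < r := lt_of_lt_of_le hr₀ hr
  set g : ℝ → ℝ≥0∞ := fun s => ENNReal.ofReal (s ^ a * f s) with hg
  set h : ℝ → ℝ≥0∞ := fun t => ENNReal.ofReal (a * t ^ (-a - 1)) with hh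
  set F : ℝ × ℝ → ℝ≥0∞ := fun p => if p.1 < p.2 then h p.2 * g p.1 else 0 with hF
  have hmeasg : Measurable g := ((measurable_id.pow_const a).mul hf).ennreal_ofReal
  have hmeash : Measurable h :=
    (measurable_const.mul (measurable_id.pow_const _)).ennreal_ofReal
  have hmeasF : Measurable F := by
    apply Measurable.ite (measurableSet_lt measurable_fst measurable_snd)
    · exact (hmeash.comp measurable_snd).mul (hmeasg.comp measurable_fst)
    · exact measurable_const
  -- J(s) for s > 0
  have hJ : ∀ s : ℝ, 0 < s → ∫⁻ t in Set.Ioi s, h t = ENNReal.ofReal (s ^ (-a)) := by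
    intro s hs
    have hp : -a - 1 < -1 := by linarith
    have h1 : ∫⁻ t in Set.Ioi s, h t
        = ∫⁻ t in Set.Ioi s, ENNReal.ofReal a * ENNReal.ofReal (t ^ (-a - 1)) := by
      apply lintegral_congr fun t => ?_
      rw [hh, ← ENNReal.ofReal_mul ha.le]
    rw [h1, lintegral_const_mul' _ _ ENNReal.ofReal_ne_top,
      lintegral_Ioi_rpow_aux hp hs, ← ENNReal.ofReal_mul ha.le]
    congr 1
    have hane : -a - 1 + 1 = -a := by ring
    rw [hane]
    have hna : -a ≠ 0 := by linarith
    field_simp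
  -- step 1: rewrite LHS as double integral
  have step1 : ∫⁻ s in Set.Ioi r, ENNReal.ofReal (f s)
      = ∫⁻ s in Set.Ioi r, ∫⁻ t, F (s, t) := by
    apply setLIntegral_congr_fun measurableSet_Ioi
    intro s hs
    have hs0 : 0 < s := hr0.trans (Set.mem_Ioi.1 hs)
    have hFe : (fun t => F (s, t)) = (Set.Ioi s).indicator (fun t => h t * g s) := by
      funext t
      by_cases hst : s < t
      · simp [hF, hst, Set.indicator_of_mem (Set.mem_Ioi.2 hst)]
      · simp [hF, hst, Set.indicator_of_notMem (fun hmem => hst (Set.mem_Ioi.1 hmem))]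
    symm
    beta_reduce
    rw [hFe, lintegral_indicator measurableSet_Ioi,
      lintegral_mul_const _ hmeash, hJ s hs0]
    show ENNReal.ofReal (s ^ (-a)) * ENNReal.ofReal (s ^ a * f s) = ENNReal.ofReal (f s)
    rw [← ENNReal.ofReal_mul (Real.rpow_nonneg hs0.le (-a))]
    congr 1
    rw [← mul_assoc, ← Real.rpow_add hs0]
    simp
  rw [step1]
  -- step 2: Tonelli
  rw [lintegral_lintegral_swap hmeasF.aemeasurable]
  -- step 3: bound inner integral
  have step3 : ∀ t : ℝ, (∫⁻ s in Set.Ioi r, F (s, t))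
      ≤ (Set.Ioi r).indicator (fun t => h t * ENNReal.ofReal (c₁ * t ^ v)) t := by
    intro t
    by_cases htr : r < t
    · rw [Set.indicator_of_mem (Set.mem_Ioi.2 htr)]
      calc ∫⁻ s in Set.Ioi r, F (s, t)
          ≤ ∫⁻ s in Set.Ioi r, (Set.Ioc (0:ℝ) t).indicator (fun s => h t * g s) s := by
            apply setLIntegral_mono' measurableSet_Ioi
            intro s hs
            have hs0 : 0 < s := hr0.trans (Set.mem_Ioi.1 hs)
            by_cases hst : s < t
            · simp only [hF, if_pos hst]
              rw [Set.indicator_of_mem (Set.mem_Ioc.2 ⟨hs0, hst.le⟩)]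
            · simp only [hF, if_neg hst]
              exact zero_le
        _ ≤ ∫⁻ s, (Set.Ioc (0:ℝ) t).indicator (fun s => h t * g s) s :=
            setLIntegral_le_lintegral _ _
        _ = ∫⁻ s in Set.Ioc (0:ℝ) t, h t * g s := lintegral_indicator measurableSet_Ioc _
        _ = h t * ∫⁻ s in Set.Ioc (0:ℝ) t, g s := lintegral_const_mul _ hmeasg
        _ ≤ h t * ENNReal.ofReal (c₁ * t ^ v) :=
            mul_le_mul_right (hbound t (hr.trans htr.le)) _
    · rw [Set.indicator_of_notMem (fun hmem => htr (Set.mem_Ioi.1 hmem))]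
      have hz : ∀ s ∈ Set.Ioi r, F (s, t) = 0 := by
        intro s hs
        have hst : ¬ s < t := fun hst => htr (lt_trans (Set.mem_Ioi.1 hs) hst)
        simp [hF, hst]
      rw [setLIntegral_congr_fun measurableSet_Ioi hz]
      simp
  calc ∫⁻ t, ∫⁻ s in Set.Ioi r, F (s, t)
      ≤ ∫⁻ t, (Set.Ioi r).indicator (fun t => h t * ENNReal.ofReal (c₁ * t ^ v)) t :=
        lintegral_mono step3
    _ = ∫⁻ t in Set.Ioi r, h t * ENNReal.ofReal (c₁ * t ^ v) :=
        lintegral_indicator measurableSet_Ioi _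
    _ = ∫⁻ t in Set.Ioi r, ENNReal.ofReal (a * c₁) * ENNReal.ofReal (t ^ (v - a - 1)) := by
        apply setLIntegral_congr_fun measurableSet_Ioi
        intro t ht
        have ht0 : 0 < t := hr0.trans (Set.mem_Ioi.1 ht)
        have h1 : (0:ℝ) ≤ a * t ^ (-a - 1) := by positivity
        have h2 : (0:ℝ) ≤ a * c₁ := by positivity
        rw [hh]
        show ENNReal.ofReal (a * t ^ (-a - 1)) * ENNReal.ofReal (c₁ * t ^ v)
          = ENNReal.ofReal (a * c₁) * ENNReal.ofReal (t ^ (v - a - 1))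
        rw [← ENNReal.ofReal_mul h1, ← ENNReal.ofReal_mul h2]
        congr 1
        rw [show v - a - 1 = (-a - 1) + v by ring, Real.rpow_add ht0]
        ring
    _ = ENNReal.ofReal (a * c₁) * ENNReal.ofReal (-r ^ (v - a - 1 + 1) / (v - a - 1 + 1)) := by
        rw [lintegral_const_mul' _ _ ENNReal.ofReal_ne_top,
          lintegral_Ioi_rpow_aux (by linarith) hr0]
    _ ≤ ENNReal.ofReal (c₁ * a / (a - v) * r ^ (v - a)) := by
        rw [← ENNReal.ofReal_mul (by positivity : (0:ℝ) ≤ a * c₁)]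
        apply ENNReal.ofReal_le_ofReal
        have he : v - a - 1 + 1 = v - a := by ring
        rw [he]
        have hne : a - v ≠ 0 := by linarith
        have hne' : v - a ≠ 0 := by linarith
        have hd : -r ^ (v - a) / (v - a) = r ^ (v - a) / (a - v) := by
          field_simp
          ring
        apply le_of_eq
        calc a * c₁ * (-r ^ (v - a) / (v - a)) = a * c₁ * (r ^ (v - a) / (a - v)) := by rw [hd]
          _ = c₁ * a / (a - v) * r ^ (v - a) := by ring
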